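/- Let n ≥ 1, k ≥ 1, and let λ = (λ_1 ≥ … ≥ λ_n ≥ 0) be a partition with at most n parts. Then, as an identity in MvPolynomial (Fin n) ℤ: n! · det(x_i^{λ_j+n−j})_{1≤i,j≤n} · Δ(X)^{2k−2} = Δ(X) · ∑_{(σ_1,…,σ_{2k}) ∈ (S_n)^{2k}} sign(σ_1)⋯sign(σ_{2k}) · ∏_{i=1}^n h_{λ_{σ_1(i)} + (n−σ_1(i)) + (n−σ_2(i)) + ⋯ + (n−σ_{2k−1}(i)) + σ_{2k}(i) − n}(X). Equivalently, S_λ(X)·Δ(X)^{2(k−1)} equals the (1/n!-scaled) hyperdeterminant of the 2k-th order hypermatrix with entries h_{λ_{i_1}+(n−i_1)+⋯+(n−i_{2k−1})+i_{2k}−n}(X), 1 ≤ i_1,…,i_{2k} ≤ n. -/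

import Mathlib

set_option maxHeartbeats 1000000

/-- `hh n p` is the `p`-th complete homogeneous symmetric polynomial in `n`
variables, with the convention `hh n p = 0` for `p < 0` and `hh n 0 = 1`. -/
noncomputable def hh (n : ℕ) (p : ℤ) : MvPolynomial (Fin n) ℤ :=
  if 0 ≤ p then MvPolynomial.hsymm (Fin n) ℤ p.toNat else 0

/-- The Vandermonde polynomial `Δ(X) = ∏_{i<j} (x_i − x_j)`. -/
noncomputable def vandermondePoly (n : ℕ) : MvPolynomial (Fin n) ℤ :=
  ∏ p ∈ Finset.univ.filter (fun p : Fin n × Fin n => p.1 < p.2),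
    (MvPolynomial.X p.1 - MvPolynomial.X p.2)

namespace SchurAux
open Finset


variable {n : ℕ}

noncomputable def hS (S : Finset (Fin n)) (p : ℕ) : MvPolynomial (Fin n) ℤ :=
  ∑ t ∈ S.sym p, (t.1.map MvPolynomial.X).prod

noncomputable def hz (S : Finset (Fin n)) (p : ℤ) : MvPolynomial (Fin n) ℤ :=
  if 0 ≤ p then hS S p.toNat else 0

noncomputable def ez (S : Finset (Fin n)) (q : ℤ) : MvPolynomial (Fin n) ℤ :=
  if 0 ≤ q then ∑ T ∈ S.powersetCard q.toNat, ∏ i ∈ T, MvPolynomial.X i else 0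

lemma hS_zero (S : Finset (Fin n)) : hS S 0 = 1 := by
  rw [hS, Finset.sym_zero, Finset.sum_singleton]
  rfl

lemma hz_neg {S : Finset (Fin n)} {p : ℤ} (hp : p < 0) : hz S p = 0 := by
  simp [hz, not_le.mpr hp]

lemma hz_zero (S : Finset (Fin n)) : hz S 0 = 1 := by
  simp [hz, hS_zero]

lemma hz_natCast (S : Finset (Fin n)) (p : ℕ) : hz S (p : ℤ) = hS S p := by
  simp [hz]

lemma ez_neg {S : Finset (Fin n)} {q : ℤ} (hq : q < 0) : ez S q = 0 := by
  simp [ez, not_le.mpr hq]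

lemma ez_zero (S : Finset (Fin n)) : ez S 0 = 1 := by
  simp [ez]

lemma ez_natCast (S : Finset (Fin n)) (q : ℕ) : ez S (q : ℤ) = ∑ T ∈ S.powersetCard q, ∏ i ∈ T, MvPolynomial.X i := by
  simp [ez]

lemma ez_eq_zero_of_card_lt {S : Finset (Fin n)} {q : ℤ} (h : (S.card : ℤ) < q) : ez S q = 0 := by
  have h0 : 0 ≤ q := le_trans (Int.natCast_nonneg _) h.le
  rw [ez, if_pos h0]
  have : S.card < q.toNat := by omega
  rw [Finset.powersetCard_eq_empty.mpr this]
  simp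

lemma hz_empty (p : ℤ) : hz (∅ : Finset (Fin n)) p = if p = 0 then 1 else 0 := by
  rcases lt_trichotomy p 0 with h | h | h
  · rw [hz_neg h, if_neg h.ne]
  · subst h; simp [hz_zero]
  · rw [if_neg h.ne']
    rw [hz, if_pos h.le]
    obtain ⟨t, ht⟩ : ∃ t : ℕ, p.toNat = t + 1 := ⟨p.toNat - 1, by omega⟩
    rw [ht, hS, Finset.sym_empty]
    simp


lemma hS_insert {k : Fin n} {S : Finset (Fin n)} (hk : k ∉ S) (p : ℕ) :
    hS (insert k S) (p + 1) = hS S (p + 1) + MvPolynomial.X k * hS (insert k S) p := by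
  classical
  rw [hS, ← Finset.sum_filter_add_sum_filter_not ((insert k S).sym (p+1)) (fun t => k ∉ t)]
  congr 1
  · apply Finset.sum_congr
    · ext t
      simp only [Finset.mem_filter, Finset.mem_sym_iff, Finset.mem_insert]
      constructor
      · rintro ⟨h1, h2⟩ a ha
        rcases h1 a ha with rfl | h
        · exact absurd ha h2
        · exact h
      · intro h
        refine ⟨fun a ha => Or.inr (h a ha), fun hkt => hk (h k hkt)⟩
    · intro t _; rfl
  · rw [hS, Finset.mul_sum]
    refine Finset.sum_bij' (fun t ht => Sym.erase t k ?_) (fun t' _ => k ::ₛ t') ?_ ?_ ?_ ?_ ?_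
    · simpa using (Finset.mem_filter.mp ht).2
    · intro t ht
      rw [Finset.mem_sym_iff]
      intro a ha
      have ht' := (Finset.mem_filter.mp ht).1
      rw [Finset.mem_sym_iff] at ht'
      exact ht' a (Multiset.mem_of_mem_erase ha)
    · intro t' ht'
      rw [Finset.mem_filter]
      constructor
      · rw [Finset.mem_sym_iff]
        intro a ha
        rcases Sym.mem_cons.mp ha with rfl | h
        · exact Finset.mem_insert_self a S
        · exact (Finset.mem_sym_iff.mp ht') a h
      · simpa using Sym.mem_cons_self k t'
    · intro t ht
      exact Sym.cons_erase _
    · intro t' ht'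
      apply Sym.coe_injective
      rw [Sym.coe_erase, Sym.coe_cons]
      exact Multiset.erase_cons_head k t'
    · intro t ht
      conv_lhs => rw [← Sym.cons_erase (show k ∈ t by simpa using (Finset.mem_filter.mp ht).2)]
      simp [Sym.cons, Multiset.map_cons, Multiset.prod_cons]

lemma hz_insert {k : Fin n} {S : Finset (Fin n)} (hk : k ∉ S) (p : ℤ) :
    hz (insert k S) p = hz S p + MvPolynomial.X k * hz (insert k S) (p - 1) := by
  rcases lt_trichotomy p 0 with h | rfl | h
  · rw [hz_neg h, hz_neg h, hz_neg (by omega)]; ring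
  · rw [hz_zero, hz_zero, hz_neg (by omega)]; ring
  · obtain ⟨t, rfl⟩ : ∃ t : ℕ, p = (t : ℤ) + 1 := ⟨(p - 1).toNat, by omega⟩
    rw [show (t : ℤ) + 1 - 1 = (t : ℤ) from by ring,
      show (t : ℤ) + 1 = ((t + 1 : ℕ) : ℤ) from by omega,
      hz_natCast, hz_natCast, hz_natCast, hS_insert hk]

lemma ez_insert {k : Fin n} {S : Finset (Fin n)} (hk : k ∉ S) (q : ℤ) :
    ez (insert k S) q = ez S q + MvPolynomial.X k * ez S (q - 1) := by
  classical
  rcases lt_trichotomy q 0 with h | rfl | h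
  · rw [ez_neg h, ez_neg h, ez_neg (by omega)]; ring
  · rw [ez_zero, ez_zero, ez_neg (by omega)]; ring
  · obtain ⟨t, rfl⟩ : ∃ t : ℕ, q = (t : ℤ) + 1 := ⟨(q - 1).toNat, by omega⟩
    rw [show (t : ℤ) + 1 - 1 = (t : ℤ) from by ring,
      show (t : ℤ) + 1 = ((t + 1 : ℕ) : ℤ) from by omega,
      ez_natCast, ez_natCast, ez_natCast, Finset.powersetCard_succ_insert hk,
      Finset.sum_union, Finset.sum_image, Finset.mul_sum]
    · congr 1
      apply Finset.sum_congr rfl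
      intro T hT
      rw [Finset.prod_insert (fun hkT => hk ((Finset.mem_powersetCard.mp hT).1 hkT))]
    · intro T1 h1 T2 h2 heq
      have k1 : k ∉ T1 := fun hkT => hk ((Finset.mem_powersetCard.mp h1).1 hkT)
      have k2 : k ∉ T2 := fun hkT => hk ((Finset.mem_powersetCard.mp h2).1 hkT)
      rw [← Finset.erase_insert k1, ← Finset.erase_insert k2, heq]
    · rw [Finset.disjoint_left]
      intro T hT1 hT2
      obtain ⟨T', hT', rfl⟩ := Finset.mem_image.mp hT2
      exact hk ((Finset.mem_powersetCard.mp hT1).1 (Finset.mem_insert_self k T'))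

lemma orth (S : Finset (Fin n)) (m : ℤ) :
    ∑ q ∈ Finset.range (S.card + 1),
      (-1 : MvPolynomial (Fin n) ℤ) ^ q * ez S (q : ℤ) * hz S (m - (q : ℤ))
      = if m = 0 then 1 else 0 := by
  classical
  induction S using Finset.induction_on generalizing m with
  | empty => simp [ez_zero, hz_empty]
  | @insert a S' ha ih =>
      rw [Finset.card_insert_of_notMem ha]
      set T := insert a S' with hT
      set c := S'.card with hc
      have step1 : ∀ q ∈ Finset.range (c + 1 + 1),
          (-1 : MvPolynomial (Fin n) ℤ) ^ q * ez T (q : ℤ) * hz T (m - (q : ℤ))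
          = (-1) ^ q * ez S' (q : ℤ) * hz T (m - (q : ℤ))
            + (-1) ^ q * (MvPolynomial.X a * ez S' ((q : ℤ) - 1)) * hz T (m - (q : ℤ)) := by
        intro q _
        rw [hT, ez_insert ha]
        ring
      rw [Finset.sum_congr rfl step1, Finset.sum_add_distrib]
      set Z := ∑ q ∈ Finset.range (c + 1),
        (-1 : MvPolynomial (Fin n) ℤ) ^ q * ez S' (q : ℤ) * hz T ((m - 1) - (q : ℤ)) with hZ
      have hA : ∑ q ∈ Finset.range (c + 1 + 1),
          (-1 : MvPolynomial (Fin n) ℤ) ^ q * ez S' (q : ℤ) * hz T (m - (q : ℤ))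
          = (if m = 0 then 1 else 0) + MvPolynomial.X a * Z := by
        rw [Finset.sum_range_succ,
          ez_eq_zero_of_card_lt (show (c : ℤ) < ((c + 1 : ℕ) : ℤ) from by push_cast; omega)]
        rw [mul_zero, zero_mul, add_zero, ← ih m, hZ, Finset.mul_sum, ← Finset.sum_add_distrib]
        apply Finset.sum_congr rfl
        intro q _
        rw [hT, hz_insert ha (m - q),
          show m - (q : ℤ) - 1 = (m - 1) - (q : ℤ) from by ring]
        rw [← hT]
        ring
      have hB : ∑ q ∈ Finset.range (c + 1 + 1),
          (-1 : MvPolynomial (Fin n) ℤ) ^ q * (MvPolynomial.X a * ez S' ((q : ℤ) - 1)) * hz T (m - (q : ℤ))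
          = -(MvPolynomial.X a * Z) := by
        rw [Finset.sum_range_succ']
        rw [show (((0 : ℕ) : ℤ)) - 1 = (-1 : ℤ) from by omega]
        rw [ez_neg (show (-1 : ℤ) < 0 from by norm_num)]
        simp only [mul_zero, zero_mul, add_zero]
        rw [hZ, Finset.mul_sum, ← Finset.sum_neg_distrib]
        apply Finset.sum_congr rfl
        intro q _
        rw [show ((q + 1 : ℕ) : ℤ) - 1 = (q : ℤ) from by omega,
          show m - ((q + 1 : ℕ) : ℤ) = (m - 1) - (q : ℤ) from by omega, pow_succ]
        ring
      rw [hA, hB]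
      ring

lemma hS_univ (c : ℕ) : hS (Finset.univ : Finset (Fin n)) c = MvPolynomial.hsymm (Fin n) ℤ c := by
  rw [hS, Finset.sym_univ, MvPolynomial.hsymm]


lemma conv (k : Fin n) (m : ℕ) :
    ∑ q ∈ Finset.range n,
      (-1 : MvPolynomial (Fin n) ℤ) ^ q * ez (Finset.univ.erase k) (q : ℤ)
        * hz Finset.univ ((m : ℤ) - (q : ℤ))
    = MvPolynomial.X k ^ m := by
  have hn : 0 < n := k.pos
  set E := Finset.univ.erase k with hE
  have hk' : k ∉ E := Finset.notMem_erase k _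
  have hu : (Finset.univ : Finset (Fin n)) = insert k E := (Finset.insert_erase (Finset.mem_univ k)).symm
  have hcard : E.card + 1 = n := by
    rw [hE, Finset.card_erase_of_mem (Finset.mem_univ k), Finset.card_univ, Fintype.card_fin]
    omega
  have hzu : ∀ p : ℤ, hz (Finset.univ : Finset (Fin n)) p = hz E p + MvPolynomial.X k * hz Finset.univ (p - 1) := by
    intro p
    conv_lhs => rw [hu]
    rw [hz_insert hk', ← hu]
  induction m with
  | zero =>
    rw [Finset.sum_eq_single_of_mem 0 (Finset.mem_range.mpr hn)]
    · simp [ez_zero, hz_zero]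
    · intro b _ hb
      rw [hz_neg (by omega : ((0 : ℕ) : ℤ) - (b : ℤ) < 0)]
      ring
  | succ m ih =>
    have step : ∀ q ∈ Finset.range n,
        (-1 : MvPolynomial (Fin n) ℤ) ^ q * ez E (q : ℤ) * hz Finset.univ (((m + 1 : ℕ) : ℤ) - (q : ℤ))
        = (-1) ^ q * ez E (q : ℤ) * hz E (((m + 1 : ℕ) : ℤ) - (q : ℤ))
          + MvPolynomial.X k * ((-1) ^ q * ez E (q : ℤ) * hz Finset.univ ((m : ℤ) - (q : ℤ))) := by
      intro q _
      rw [hzu (((m + 1 : ℕ) : ℤ) - (q : ℤ)),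
        show ((m + 1 : ℕ) : ℤ) - (q : ℤ) - 1 = (m : ℤ) - (q : ℤ) from by omega]
      ring
    have hsum : ∑ q ∈ Finset.range n,
        (-1 : MvPolynomial (Fin n) ℤ) ^ q * ez E (q : ℤ) * hz E (((m + 1 : ℕ) : ℤ) - (q : ℤ))
        = if ((m + 1 : ℕ) : ℤ) = 0 then 1 else 0 := by
      rw [← orth E ((m + 1 : ℕ) : ℤ), hcard]
    rw [Finset.sum_congr rfl step, Finset.sum_add_distrib, ← Finset.mul_sum, ih, hsum,
      if_neg (by omega : ((m + 1 : ℕ) : ℤ) ≠ 0), pow_succ]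
    ring

lemma hz_univ_eq (p : ℤ) : hz (Finset.univ : Finset (Fin n)) p = hh n p := by
  rw [hz, hh]
  split_ifs with h
  · exact hS_univ _
  · rfl

noncomputable def Bmat (n : ℕ) : Matrix (Fin n) (Fin n) (MvPolynomial (Fin n) ℤ) :=
  Matrix.of fun k q => (-1) ^ (q : ℕ) * ez (Finset.univ.erase k) ((q : ℕ) : ℤ)

noncomputable def Hmat (n : ℕ) (m : Fin n → ℕ) : Matrix (Fin n) (Fin n) (MvPolynomial (Fin n) ℤ) :=
  Matrix.of fun q j => hz Finset.univ ((m j : ℤ) - ((q : ℕ) : ℤ))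

noncomputable def H2mat (n : ℕ) (m : Fin n → ℕ) : Matrix (Fin n) (Fin n) (MvPolynomial (Fin n) ℤ) :=
  Matrix.of fun q j => hz Finset.univ ((m j : ℤ) + ((q : ℕ) : ℤ) + 1 - (n : ℤ))

lemma factor (m : Fin n → ℕ) :
    (Matrix.of fun i j : Fin n => MvPolynomial.X i ^ m j) = Bmat n * Hmat n m := by
  apply Matrix.ext
  intro i j
  rw [Matrix.mul_apply]
  simp only [Matrix.of_apply]
  rw [← conv i (m j), ← Fin.sum_univ_eq_sum_range
    (fun q : ℕ => (-1) ^ q * ez (Finset.univ.erase i) (q : ℤ)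
      * hz Finset.univ ((m j : ℤ) - (q : ℤ))) n]
  rfl

lemma Hmat_eq_submatrix (m : Fin n → ℕ) :
    Hmat n m = (H2mat n m).submatrix Fin.revPerm id := by
  apply Matrix.ext
  intro q j
  show hz Finset.univ ((m j : ℤ) - ((q : ℕ) : ℤ))
    = hz Finset.univ ((m j : ℤ) + ((Fin.rev q : ℕ) : ℤ) + 1 - (n : ℤ))
  congr 1
  have hq : (q : ℕ) < n := q.isLt
  rw [Fin.val_rev]
  omega

lemma detH_eq (m : Fin n → ℕ) :
    (Hmat n m).det
      = ((Equiv.Perm.sign (Fin.revPerm : Equiv.Perm (Fin n)) : ℤ) : MvPolynomial (Fin n) ℤ)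
        * (H2mat n m).det := by
  rw [Hmat_eq_submatrix, Matrix.det_permute]

lemma detH2_apply (m : Fin n → ℕ) :
    (H2mat n m).det = ∑ τ : Equiv.Perm (Fin n),
      ((Equiv.Perm.sign τ : ℤ) : MvPolynomial (Fin n) ℤ)
        * ∏ i, hh n ((m i : ℤ) + ((τ i : ℕ) : ℤ) + 1 - (n : ℤ)) := by
  rw [Matrix.det_apply']
  apply Finset.sum_congr rfl
  intro τ _
  congr 1
  apply Finset.prod_congr rfl
  intro i _
  exact hz_univ_eq _

lemma prod_Ioi_eq_prod_filter (f : Fin n → Fin n → MvPolynomial (Fin n) ℤ) :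
    ∏ i, ∏ j ∈ Finset.Ioi i, f i j
      = ∏ p ∈ Finset.univ.filter (fun p : Fin n × Fin n => p.1 < p.2), f p.1 p.2 := by
  rw [Finset.prod_sigma']
  refine Finset.prod_bij' (fun x _ => (x.1, x.2)) (fun p _ => ⟨p.1, p.2⟩) ?_ ?_ ?_ ?_ ?_
  · intro x hx
    simp only [Finset.mem_filter, Finset.mem_univ, true_and]
    have := (Finset.mem_sigma.mp hx).2
    exact Finset.mem_Ioi.mp this
  · intro p hp
    rw [Finset.mem_sigma]
    exact ⟨Finset.mem_univ _, Finset.mem_Ioi.mpr (Finset.mem_filter.mp hp).2⟩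
  · intro x _; rfl
  · intro p _; rfl
  · intro x _; rfl

lemma prod_filter_rev (f : Fin n → Fin n → MvPolynomial (Fin n) ℤ) :
    ∏ p ∈ Finset.univ.filter (fun p : Fin n × Fin n => p.1 < p.2), f (Fin.rev p.2) (Fin.rev p.1)
      = ∏ p ∈ Finset.univ.filter (fun p : Fin n × Fin n => p.1 < p.2), f p.1 p.2 := by
  refine Finset.prod_bij' (fun p _ => (Fin.rev p.2, Fin.rev p.1)) (fun p _ => (Fin.rev p.2, Fin.rev p.1)) ?_ ?_ ?_ ?_ ?_
  · intro p hp
    simp only [Finset.mem_filter, Finset.mem_univ, true_and] at hp ⊢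
    exact Fin.rev_lt_rev.mpr hp
  · intro p hp
    simp only [Finset.mem_filter, Finset.mem_univ, true_and] at hp ⊢
    exact Fin.rev_lt_rev.mpr hp
  · intro p _
    simp [Fin.rev_rev]
  · intro p _
    simp [Fin.rev_rev]
  · intro p _
    rfl

lemma detA_special :
    (Matrix.of fun i j : Fin n => MvPolynomial.X i ^ (n - 1 - (j : ℕ))).det
      = vandermondePoly n := by
  have h1 : ((Matrix.of fun i j : Fin n =>
        (MvPolynomial.X i ^ (n - 1 - (j : ℕ)) : MvPolynomial (Fin n) ℤ))).det
      = ((Matrix.of fun i j : Fin n =>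
          (MvPolynomial.X i ^ (n - 1 - (j : ℕ)) : MvPolynomial (Fin n) ℤ)).submatrix
          (Fin.revPerm : Equiv.Perm (Fin n)) (Fin.revPerm : Equiv.Perm (Fin n))).det :=
    (Matrix.det_submatrix_equiv_self _ _).symm
  rw [h1]
  have h2 : ((Matrix.of fun i j : Fin n =>
        (MvPolynomial.X i ^ (n - 1 - (j : ℕ)) : MvPolynomial (Fin n) ℤ)).submatrix
      (Fin.revPerm : Equiv.Perm (Fin n)) (Fin.revPerm : Equiv.Perm (Fin n)))
      = Matrix.vandermonde (fun i => MvPolynomial.X (Fin.rev i)) := by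
    apply Matrix.ext
    intro i j
    simp only [Matrix.submatrix_apply, Matrix.of_apply, Matrix.vandermonde_apply,
      Fin.revPerm_apply]
    congr 1
    have := j.isLt
    rw [Fin.val_rev]
    omega
  rw [h2, Matrix.det_vandermonde]
  rw [prod_Ioi_eq_prod_filter (fun i j => MvPolynomial.X (Fin.rev j) - MvPolynomial.X (Fin.rev i))]
  rw [vandermondePoly, ← prod_filter_rev (fun a b => MvPolynomial.X a - MvPolynomial.X b)]

lemma detH2_special :
    (H2mat n (fun j => n - 1 - (j : ℕ))).det = 1 := by
  rw [Matrix.det_of_lowerTriangular]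
  · apply Finset.prod_eq_one
    intro q _
    show hz Finset.univ (((n - 1 - (q : ℕ) : ℕ) : ℤ) + ((q : ℕ) : ℤ) + 1 - (n : ℤ)) = 1
    have hq : (q : ℕ) < n := q.isLt
    rw [show ((n - 1 - (q : ℕ) : ℕ) : ℤ) + ((q : ℕ) : ℤ) + 1 - (n : ℤ) = 0 from by omega]
    exact hz_zero _
  · intro q j h
    have hlt : (q : ℕ) < (j : ℕ) := h
    show hz Finset.univ (((n - 1 - (j : ℕ) : ℕ) : ℤ) + ((q : ℕ) : ℤ) + 1 - (n : ℤ)) = 0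
    have hj : (j : ℕ) < n := j.isLt
    exact hz_neg (by omega)

lemma lemA (m : Fin n → ℕ) :
    vandermondePoly n * ∑ τ : Equiv.Perm (Fin n),
      ((Equiv.Perm.sign τ : ℤ) : MvPolynomial (Fin n) ℤ)
        * ∏ i, hh n ((m i : ℤ) + ((τ i : ℕ) : ℤ) + 1 - (n : ℤ))
    = (Matrix.of fun i j : Fin n => MvPolynomial.X i ^ m j).det := by
  have hfact : ∀ m' : Fin n → ℕ,
      (Matrix.of fun i j : Fin n => MvPolynomial.X i ^ m' j).det
        = (Bmat n).det * (Hmat n m').det := by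
    intro m'
    rw [factor m', Matrix.det_mul]
  set ε : MvPolynomial (Fin n) ℤ :=
    ((Equiv.Perm.sign (Fin.revPerm : Equiv.Perm (Fin n)) : ℤ) : MvPolynomial (Fin n) ℤ) with hε
  have hε2 : ε * ε = 1 := by
    rw [hε, ← Int.cast_mul, ← Units.val_mul, Int.units_mul_self, Units.val_one, Int.cast_one]
  have hspecial : vandermondePoly n = (Bmat n).det * ε := by
    rw [← detA_special, hfact, detH_eq, detH2_special, mul_one]
  have hBdet : (Bmat n).det = vandermondePoly n * ε := by
    rw [hspecial, mul_assoc, hε2, mul_one]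
  rw [← detH2_apply, hfact, detH_eq, hBdet]
  rw [show vandermondePoly n * ε * (ε * (H2mat n m).det)
      = (ε * ε) * (vandermondePoly n * (H2mat n m).det) from by ring, hε2, one_mul]

end SchurAux
namespace SchurAux
open Finset

theorem aux (n k : ℕ) (hn : 1 ≤ n) (hk : 1 ≤ k) (lam : Fin n → ℕ)
    (L z : Fin (2 * k)) (hLval : (L : ℕ) = 2 * k - 1) (hzval : (z : ℕ) = 0) :
    (Nat.factorial n : ℤ) •
        ((Matrix.of fun i j : Fin n =>
            MvPolynomial.X i ^ (lam j + (n - 1 - (j : ℕ)))).det *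
          vandermondePoly n ^ (2 * k - 2))
      = vandermondePoly n *
          ∑ σ : Fin (2 * k) → Equiv.Perm (Fin n),
            (∏ s, (Equiv.Perm.sign (σ s) : ℤ)) •
              ∏ i, hh n
                ((lam (σ z i) : ℤ)
                  + (∑ s ∈ Finset.univ.filter (fun s : Fin (2 * k) => (s : ℕ) < 2 * k - 1),
                      ((n : ℤ) - (((σ s i : ℕ) : ℤ) + 1)))
                  + (((σ L i : ℕ) : ℤ) + 1) - (n : ℤ)) := by
  classical
  have hzL : z ≠ L := by
    rw [Ne, Fin.ext_iff, hzval, hLval]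
    omega
  obtain ⟨M, hM⟩ : ∃ M : ({s : Fin (2 * k) // s ≠ L} → Equiv.Perm (Fin n)) → Fin n → ℕ,
      ∀ g i, M g i = lam (g ⟨z, hzL⟩ i)
        + ∑ s : {s : Fin (2 * k) // s ≠ L}, (n - 1 - ((g s i : ℕ))) :=
    ⟨_, fun g i => rfl⟩
  obtain ⟨c, hc⟩ : ∃ c : {s : Fin (2 * k) // s ≠ L} → Fin n → ℕ,
      ∀ s v, c s v = if s = ⟨z, hzL⟩ then lam v + (n - 1 - (v : ℕ)) else n - 1 - (v : ℕ) :=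
    ⟨_, fun s v => rfl⟩
  have step3 : ∑ σ : Fin (2 * k) → Equiv.Perm (Fin n),
        (∏ s, (Equiv.Perm.sign (σ s) : ℤ)) •
          ∏ i, hh n
            ((lam (σ z i) : ℤ)
              + (∑ s ∈ Finset.univ.filter (fun s : Fin (2 * k) => (s : ℕ) < 2 * k - 1),
                  ((n : ℤ) - (((σ s i : ℕ) : ℤ) + 1)))
              + (((σ L i : ℕ) : ℤ) + 1) - (n : ℤ))
      = ∑ g : {s : Fin (2 * k) // s ≠ L} → Equiv.Perm (Fin n), ∑ τ : Equiv.Perm (Fin n),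
          ((∏ s : {s : Fin (2 * k) // s ≠ L},
              ((Equiv.Perm.sign (g s) : ℤ) : MvPolynomial (Fin n) ℤ))
            * ((Equiv.Perm.sign τ : ℤ) : MvPolynomial (Fin n) ℤ)) *
            ∏ i, hh n ((M g i : ℤ) + ((τ i : ℕ) : ℤ) + 1 - (n : ℤ)) := by
    have hfil : Finset.univ.filter (fun s : Fin (2 * k) => (s : ℕ) < 2 * k - 1)
        = Finset.univ.erase L := by
      ext s
      simp only [Finset.mem_filter, Finset.mem_univ, true_and, Finset.mem_erase, and_true,
        Ne, Fin.ext_iff, hLval]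
      have := s.isLt
      omega
    have hexp : ∀ (g : {s : Fin (2 * k) // s ≠ L} → Equiv.Perm (Fin n))
        (τ : Equiv.Perm (Fin n)) (i : Fin n),
        (lam (g ⟨z, hzL⟩ i) : ℤ)
          + (∑ s : {s : Fin (2 * k) // s ≠ L}, ((n : ℤ) - (((g s i : ℕ) : ℤ) + 1)))
          + (((τ i : ℕ) : ℤ) + 1) - (n : ℤ)
        = (M g i : ℤ) + ((τ i : ℕ) : ℤ) + 1 - (n : ℤ) := by
      intro g τ i
      rw [hM]
      push_cast
      rw [show (∑ s : {s : Fin (2 * k) // s ≠ L}, ((n : ℤ) - (((g s i : ℕ) : ℤ) + 1)))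
          = ∑ s : {s : Fin (2 * k) // s ≠ L}, (((n - 1 - ((g s i : ℕ)) : ℕ)) : ℤ) from
        Finset.sum_congr rfl fun s _ => by have := (g s i).isLt; omega]
      push_cast
      ring
    rw [← Equiv.sum_comp (Equiv.funSplitAt L (Equiv.Perm (Fin n))).symm,
      Fintype.sum_prod_type, Finset.sum_comm]
    apply Finset.sum_congr rfl
    intro g _
    apply Finset.sum_congr rfl
    intro τ _
    set σ : Fin (2 * k) → Equiv.Perm (Fin n) :=
      (Equiv.funSplitAt L (Equiv.Perm (Fin n))).symm (τ, g) with hσ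
    have hevL : σ L = τ := by rw [hσ]; simp [Equiv.funSplitAt]
    have hevne : ∀ (s : Fin (2 * k)) (h : s ≠ L), σ s = g ⟨s, h⟩ := by
      intro s h
      rw [hσ]
      simp [Equiv.funSplitAt, h]
    have hsign : (∏ s, (Equiv.Perm.sign (σ s) : ℤ))
        = (∏ s : {s : Fin (2 * k) // s ≠ L}, (Equiv.Perm.sign (g s) : ℤ))
          * (Equiv.Perm.sign τ : ℤ) := by
      rw [← Finset.mul_prod_erase Finset.univ _ (Finset.mem_univ L), hevL, mul_comm]
      congr 1
      rw [Finset.prod_subtype (Finset.univ.erase L) (p := fun s => s ≠ L)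
        (fun x => by simp [Finset.mem_erase])]
      exact Finset.prod_congr rfl fun x _ => by rw [hevne x x.2]
    have hfsum : ∀ i : Fin n,
        (∑ s ∈ Finset.univ.filter (fun s : Fin (2 * k) => (s : ℕ) < 2 * k - 1),
          ((n : ℤ) - (((σ s i : ℕ) : ℤ) + 1)))
        = ∑ s : {s : Fin (2 * k) // s ≠ L}, ((n : ℤ) - (((g s i : ℕ) : ℤ) + 1)) := by
      intro i
      rw [hfil, Finset.sum_subtype (Finset.univ.erase L) (p := fun s => s ≠ L)
        (fun x => by simp [Finset.mem_erase])]
      exact Finset.sum_congr rfl fun x _ => by rw [hevne x x.2]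
    rw [zsmul_eq_mul, hsign]
    push_cast
    congr 1
    apply Finset.prod_congr rfl
    intro i _
    rw [hevL, hevne z hzL, hfsum i, hexp g τ i]
  rw [step3]
  have step4 : vandermondePoly n *
        ∑ g : {s : Fin (2 * k) // s ≠ L} → Equiv.Perm (Fin n), ∑ τ : Equiv.Perm (Fin n),
          ((∏ s : {s : Fin (2 * k) // s ≠ L},
              ((Equiv.Perm.sign (g s) : ℤ) : MvPolynomial (Fin n) ℤ))
            * ((Equiv.Perm.sign τ : ℤ) : MvPolynomial (Fin n) ℤ)) *
            ∏ i, hh n ((M g i : ℤ) + ((τ i : ℕ) : ℤ) + 1 - (n : ℤ))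
      = ∑ g : {s : Fin (2 * k) // s ≠ L} → Equiv.Perm (Fin n),
          (∏ s : {s : Fin (2 * k) // s ≠ L},
              ((Equiv.Perm.sign (g s) : ℤ) : MvPolynomial (Fin n) ℤ)) *
            (Matrix.of fun i j : Fin n => MvPolynomial.X i ^ M g j).det := by
    rw [Finset.mul_sum]
    apply Finset.sum_congr rfl
    intro g _
    rw [← lemA (M g), Finset.mul_sum, Finset.mul_sum, Finset.mul_sum]
    apply Finset.sum_congr rfl
    intro τ _
    ring
  rw [step4]
  have step7 : ∑ g : {s : Fin (2 * k) // s ≠ L} → Equiv.Perm (Fin n),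
        (∏ s : {s : Fin (2 * k) // s ≠ L},
            ((Equiv.Perm.sign (g s) : ℤ) : MvPolynomial (Fin n) ℤ)) *
          (Matrix.of fun i j : Fin n => MvPolynomial.X i ^ M g j).det
      = ∑ π : Equiv.Perm (Fin n), ((Equiv.Perm.sign π : ℤ) : MvPolynomial (Fin n) ℤ) *
          ∏ s : {s : Fin (2 * k) // s ≠ L},
            (∑ τ : Equiv.Perm (Fin n), ((Equiv.Perm.sign τ : ℤ) : MvPolynomial (Fin n) ℤ)
              * ∏ j, MvPolynomial.X (π j) ^ c s (τ j)) := by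
    have hMc : ∀ (g : {s : Fin (2 * k) // s ≠ L} → Equiv.Perm (Fin n)) (j : Fin n),
        M g j = ∑ s : {s : Fin (2 * k) // s ≠ L}, c s (g s j) := by
      intro g j
      rw [hM]
      rw [show (∑ s : {s : Fin (2 * k) // s ≠ L}, c s (g s j))
        = ∑ s : {s : Fin (2 * k) // s ≠ L},
          ((if s = ⟨z, hzL⟩ then lam (g s j) else 0) + (n - 1 - ((g s j : ℕ)))) from
        Finset.sum_congr rfl fun s _ => by rw [hc]; split_ifs <;> omega]
      rw [Finset.sum_add_distrib, Finset.sum_ite_eq' Finset.univ (⟨z, hzL⟩ : {s : Fin (2 * k) // s ≠ L})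
        (fun s => lam (g s j)), if_pos (Finset.mem_univ _)]
    have hdet : ∀ g : {s : Fin (2 * k) // s ≠ L} → Equiv.Perm (Fin n),
        (Matrix.of fun i j : Fin n => MvPolynomial.X i ^ M g j).det
          = ∑ π : Equiv.Perm (Fin n), ((Equiv.Perm.sign π : ℤ) : MvPolynomial (Fin n) ℤ)
              * ∏ j, MvPolynomial.X (π j) ^ M g j := by
      intro g
      rw [Matrix.det_apply']
      exact Finset.sum_congr rfl fun π _ => rfl
    calc ∑ g : {s : Fin (2 * k) // s ≠ L} → Equiv.Perm (Fin n),
          (∏ s : {s : Fin (2 * k) // s ≠ L},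
              ((Equiv.Perm.sign (g s) : ℤ) : MvPolynomial (Fin n) ℤ)) *
            (Matrix.of fun i j : Fin n => MvPolynomial.X i ^ M g j).det
        = ∑ g : {s : Fin (2 * k) // s ≠ L} → Equiv.Perm (Fin n), ∑ π : Equiv.Perm (Fin n),
            ((Equiv.Perm.sign π : ℤ) : MvPolynomial (Fin n) ℤ) *
              ((∏ s : {s : Fin (2 * k) // s ≠ L},
                ((Equiv.Perm.sign (g s) : ℤ) : MvPolynomial (Fin n) ℤ))
                * ∏ j, MvPolynomial.X (π j) ^ M g j) := by
          apply Finset.sum_congr rfl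
          intro g _
          rw [hdet g, Finset.mul_sum]
          exact Finset.sum_congr rfl fun π _ => by ring
      _ = ∑ π : Equiv.Perm (Fin n), ∑ g : {s : Fin (2 * k) // s ≠ L} → Equiv.Perm (Fin n),
            ((Equiv.Perm.sign π : ℤ) : MvPolynomial (Fin n) ℤ) *
              ((∏ s : {s : Fin (2 * k) // s ≠ L},
                ((Equiv.Perm.sign (g s) : ℤ) : MvPolynomial (Fin n) ℤ))
                * ∏ j, MvPolynomial.X (π j) ^ M g j) := Finset.sum_comm
      _ = ∑ π : Equiv.Perm (Fin n), ((Equiv.Perm.sign π : ℤ) : MvPolynomial (Fin n) ℤ) *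
          ∏ s : {s : Fin (2 * k) // s ≠ L},
            (∑ τ : Equiv.Perm (Fin n), ((Equiv.Perm.sign τ : ℤ) : MvPolynomial (Fin n) ℤ)
              * ∏ j, MvPolynomial.X (π j) ^ c s (τ j)) := by
          apply Finset.sum_congr rfl
          intro π _
          rw [← Finset.mul_sum]
          congr 1
          rw [Finset.prod_univ_sum (fun _ => (Finset.univ : Finset (Equiv.Perm (Fin n))))
            (fun s τ => ((Equiv.Perm.sign τ : ℤ) : MvPolynomial (Fin n) ℤ)
              * ∏ j, MvPolynomial.X (π j) ^ c s (τ j)), Fintype.piFinset_univ]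
          apply Finset.sum_congr rfl
          intro g _
          rw [Finset.prod_mul_distrib]
          congr 1
          rw [Finset.prod_comm]
          apply Finset.prod_congr rfl
          intro j _
          rw [hMc g j, Finset.prod_pow_eq_pow_sum]
  rw [step7]
  have step8 : ∀ (π : Equiv.Perm (Fin n)) (s : {s : Fin (2 * k) // s ≠ L}),
      (∑ τ : Equiv.Perm (Fin n), ((Equiv.Perm.sign τ : ℤ) : MvPolynomial (Fin n) ℤ)
        * ∏ j, MvPolynomial.X (π j) ^ c s (τ j))
      = ((Equiv.Perm.sign π : ℤ) : MvPolynomial (Fin n) ℤ) *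
          (if s = ⟨z, hzL⟩ then
            (Matrix.of fun i j : Fin n =>
              MvPolynomial.X i ^ (lam j + (n - 1 - (j : ℕ)))).det
          else vandermondePoly n) := by
    intro π s
    have h1 : (((Matrix.of fun a b : Fin n => MvPolynomial.X b ^ c s a)).submatrix id ⇑π).det
        = ∑ τ : Equiv.Perm (Fin n), ((Equiv.Perm.sign τ : ℤ) : MvPolynomial (Fin n) ℤ)
            * ∏ j, MvPolynomial.X (π j) ^ c s (τ j) := by
      rw [Matrix.det_apply']
      exact Finset.sum_congr rfl fun τ _ => rfl
    rw [← h1, Matrix.det_permute' π]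
    congr 1
    rw [← Matrix.det_transpose]
    by_cases hs : s = ⟨z, hzL⟩
    · rw [if_pos hs]
      congr 1
      apply Matrix.ext
      intro a b
      show (MvPolynomial.X a ^ c s b : MvPolynomial (Fin n) ℤ) = _
      rw [hc, if_pos hs]
      rfl
    · rw [if_neg hs, ← detA_special (n := n)]
      congr 1
      apply Matrix.ext
      intro a b
      show (MvPolynomial.X a ^ c s b : MvPolynomial (Fin n) ℤ) = _
      rw [hc, if_neg hs]
      rfl
  have hcardSub : Fintype.card {s : Fin (2 * k) // s ≠ L} = 2 * k - 1 := by
    rw [Fintype.card_subtype]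
    rw [Finset.filter_ne', Finset.card_erase_of_mem (Finset.mem_univ _), Finset.card_univ,
      Fintype.card_fin]
  have hprod : ∀ π : Equiv.Perm (Fin n),
      ∏ s : {s : Fin (2 * k) // s ≠ L},
        (((Equiv.Perm.sign π : ℤ) : MvPolynomial (Fin n) ℤ) *
          (if s = ⟨z, hzL⟩ then
            (Matrix.of fun i j : Fin n =>
              MvPolynomial.X i ^ (lam j + (n - 1 - (j : ℕ)))).det
          else vandermondePoly n))
      = ((Equiv.Perm.sign π : ℤ) : MvPolynomial (Fin n) ℤ) ^ (2 * k - 1) *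
          ((Matrix.of fun i j : Fin n =>
              MvPolynomial.X i ^ (lam j + (n - 1 - (j : ℕ)))).det
            * vandermondePoly n ^ (2 * k - 2)) := by
    intro π
    rw [Finset.prod_mul_distrib, Finset.prod_const, Finset.card_univ, hcardSub]
    congr 1
    rw [← Finset.mul_prod_erase Finset.univ _
      (Finset.mem_univ (⟨z, hzL⟩ : {s : Fin (2 * k) // s ≠ L})), if_pos rfl]
    congr 1
    rw [Finset.prod_congr rfl (fun s hs => if_neg (Finset.mem_erase.mp hs).1),
      Finset.prod_const, Finset.card_erase_of_mem (Finset.mem_univ _), Finset.card_univ,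
      hcardSub, show 2 * k - 1 - 1 = 2 * k - 2 from by omega]
  have hsgpow : ∀ π : Equiv.Perm (Fin n),
      ((Equiv.Perm.sign π : ℤ) : MvPolynomial (Fin n) ℤ)
        * ((Equiv.Perm.sign π : ℤ) : MvPolynomial (Fin n) ℤ) ^ (2 * k - 1) = 1 := by
    intro π
    rw [← pow_succ', show 2 * k - 1 + 1 = 2 * k from by omega]
    rw [← Int.cast_pow,
      show ((Equiv.Perm.sign π : ℤ)) ^ (2 * k)
          = (((Equiv.Perm.sign π ^ (2 * k) : ℤˣ)) : ℤ) from by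
        rw [Units.val_pow_eq_pow_val],
      show (Equiv.Perm.sign π) ^ (2 * k) = 1 from by
        rw [pow_mul, Int.units_sq, one_pow],
      Units.val_one, Int.cast_one]
  have final : ∑ π : Equiv.Perm (Fin n), ((Equiv.Perm.sign π : ℤ) : MvPolynomial (Fin n) ℤ) *
      ∏ s : {s : Fin (2 * k) // s ≠ L},
        (∑ τ : Equiv.Perm (Fin n), ((Equiv.Perm.sign τ : ℤ) : MvPolynomial (Fin n) ℤ)
          * ∏ j, MvPolynomial.X (π j) ^ c s (τ j))
      = (Nat.factorial n : ℤ) •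
          ((Matrix.of fun i j : Fin n =>
              MvPolynomial.X i ^ (lam j + (n - 1 - (j : ℕ)))).det
            * vandermondePoly n ^ (2 * k - 2)) := by
    have hterm : ∀ π : Equiv.Perm (Fin n),
        ((Equiv.Perm.sign π : ℤ) : MvPolynomial (Fin n) ℤ) *
          ∏ s : {s : Fin (2 * k) // s ≠ L},
            (∑ τ : Equiv.Perm (Fin n), ((Equiv.Perm.sign τ : ℤ) : MvPolynomial (Fin n) ℤ)
              * ∏ j, MvPolynomial.X (π j) ^ c s (τ j))
        = (Matrix.of fun i j : Fin n =>
              MvPolynomial.X i ^ (lam j + (n - 1 - (j : ℕ)))).det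
            * vandermondePoly n ^ (2 * k - 2) := by
      intro π
      rw [Finset.prod_congr rfl (fun s _ => step8 π s), hprod π, ← mul_assoc, hsgpow π, one_mul]
    rw [Finset.sum_congr rfl (fun π _ => hterm π), Finset.sum_const, Finset.card_univ,
      Fintype.card_perm, Fintype.card_fin, natCast_zsmul]
  rw [final]
end SchurAux

theorem schur_vandermonde_pow_eq_hyperdet
    (n k : ℕ) (hn : 1 ≤ n) (hk : 1 ≤ k)
    (lam : Fin n → ℕ) (hlam : Antitone lam) :
    (Nat.factorial n : ℤ) •
        ((Matrix.of fun i j : Fin n =>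
            MvPolynomial.X i ^ (lam j + (n - 1 - (j : ℕ)))).det *
          vandermondePoly n ^ (2 * k - 2))
      = vandermondePoly n *
          ∑ σ : Fin (2 * k) → Equiv.Perm (Fin n),
            (∏ s, (Equiv.Perm.sign (σ s) : ℤ)) •
              ∏ i, hh n
                ((lam (σ ⟨0, by omega⟩ i) : ℤ)
                  + (∑ s ∈ Finset.univ.filter (fun s : Fin (2 * k) => (s : ℕ) < 2 * k - 1),
                      ((n : ℤ) - (((σ s i : ℕ) : ℤ) + 1)))
                  + (((σ ⟨2 * k - 1, by omega⟩ i : ℕ) : ℤ) + 1) - (n : ℤ)) :=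
  SchurAux.aux n k hn hk lam ⟨2 * k - 1, by omega⟩ ⟨0, by omega⟩ rfl rfl
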